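/- Every synchronizing weakly acyclic automaton with n states has a synchronizing word of length at most n − 1. -/
import Mathlib


/-- The extension of the transition function to words. -/
def deltaStar {Q A : Type*} (δ : Q → A → Q) (q : Q) (w : List A) : Q := w.foldl δ q

/-- A simple cycle: pairwise distinct states `q 0, …, q (k-1)` together with letters
mapping each state of the cycle to the next one (cyclically). -/
def IsSimpleCycle {Q A : Type*} (δ : Q → A → Q) (k : ℕ) (q : Fin k → Q) : Prop :=
  0 < k ∧ Function.Injective q ∧
    ∃ x : Fin k → A, ∀ i : Fin k, δ (q i) (x i) = q ⟨(i.val + 1) % k, Nat.mod_lt _ i.pos⟩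

/-- An automaton is weakly acyclic if all its simple cycles are self-loops. -/
def WeaklyAcyclic {Q A : Type*} (δ : Q → A → Q) : Prop :=
  ∀ (k : ℕ) (q : Fin k → Q), IsSimpleCycle δ k q → k = 1

/-- A sink state is fixed by every letter. -/
def IsSink {Q A : Type*} (δ : Q → A → Q) (q : Q) : Prop := ∀ x : A, δ q x = q

/-- The word `w` synchronizes the set `S` of states. -/
def SyncsSet {Q A : Type*} (δ : Q → A → Q) (S : Finset Q) (w : List A) : Prop :=
  ∃ q : Q, ∀ s ∈ S, deltaStar δ s w = q

/-- A set of states is synchronizing if some word synchronizes it. -/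
def IsSyncSet {Q A : Type*} (δ : Q → A → Q) (S : Finset Q) : Prop :=
  ∃ w : List A, SyncsSet δ S w

/-- The rank of a word with respect to an automaton: the size of the image of the
state set under the word. -/
def wordRank {Q A : Type*} [Fintype Q] [DecidableEq Q] (δ : Q → A → Q) (w : List A) : ℕ :=
  (Finset.univ.image fun q => deltaStar δ q w).card

/-- The rank of an automaton: the minimum rank of a word with respect to it. -/
noncomputable def autRank {Q A : Type*} [Fintype Q] [DecidableEq Q] (δ : Q → A → Q) : ℕ :=
  sInf {r | ∃ w : List A, wordRank δ w = r}

/-- The rank of a word with respect to a subset of states. -/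
def subsetWordRank {Q A : Type*} [DecidableEq Q] (δ : Q → A → Q) (S : Finset Q)
    (w : List A) : ℕ :=
  (S.image fun q => deltaStar δ q w).card

/-- The rank of a subset of states: the minimum rank of a word with respect to it. -/
noncomputable def subsetRank {Q A : Type*} [DecidableEq Q] (δ : Q → A → Q) (S : Finset Q) : ℕ :=
  sInf {r | ∃ w : List A, subsetWordRank δ S w = r}

/-- `w^j`: the word obtained by `j` concatenations of `w`. -/
def wordPow {A : Type*} (w : List A) (j : ℕ) : List A := (List.replicate j w).flatten


def Step {Q A : Type*} (δ : Q → A → Q) (p q : Q) : Prop := ∃ a : A, δ p a = q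

lemma closed_walk_const {Q A : Type*} {δ : Q → A → Q} (hwa : WeaklyAcyclic δ) :
    ∀ (m : ℕ) (s : ℕ → Q), (∀ i < m, Step δ (s i) (s (i+1))) → s m = s 0 →
      ∀ i ≤ m, s i = s 0 := by
  intro m
  induction m using Nat.strong_induction_on with
  | _ m ih =>
    intro s hstep hclosed i hi
    rcases Nat.eq_zero_or_pos m with hm | hm
    · have : i = 0 := by omega
      rw [this]
    by_cases hinj : Function.Injective (fun k : Fin m => s k.val)
    · -- simple cycle of length m
      have hx : ∀ k : Fin m, Step δ (s k.val) (s ((k.val + 1) % m)) := by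
        intro k
        rcases Nat.lt_or_ge (k.val + 1) m with h | h
        · rw [Nat.mod_eq_of_lt h]; exact hstep k.val k.isLt
        · have he : k.val + 1 = m := le_antisymm k.isLt h
          rw [he, Nat.mod_self]
          have := hstep k.val k.isLt
          rw [he, hclosed] at this
          exact this
      have hcyc : IsSimpleCycle δ m (fun k : Fin m => s k.val) := by
        refine ⟨hm, hinj, fun k => (hx k).choose, fun k => (hx k).choose_spec⟩
      have hm1 := hwa m _ hcyc
      subst hm1
      interval_cases i
      · rfl
      · exact hclosed
    · -- duplicate on the cycle
      rw [Function.not_injective_iff] at hinj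
      obtain ⟨a, b, hab, hne⟩ := hinj
      obtain ⟨i₀, j₀, hij, hjm, heq⟩ :
          ∃ i₀ j₀ : ℕ, i₀ < j₀ ∧ j₀ < m ∧ s i₀ = s j₀ := by
        rcases Nat.lt_or_ge a.val b.val with h | h
        · exact ⟨a.val, b.val, h, b.isLt, hab⟩
        · refine ⟨b.val, a.val, ?_, a.isLt, hab.symm⟩
          rcases Nat.lt_or_ge b.val a.val with h2 | h2
          · exact h2
          · exact absurd (Fin.ext (le_antisymm h h2)).symm hne
      set d := j₀ - i₀ with hd
      have hd0 : 0 < d := by omega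
      -- middle closed walk
      have hmid : ∀ k ≤ d, s (k + i₀) = s i₀ := by
        have := ih d (by omega) (fun k => s (k + i₀))
          (fun k hk => by
            have := hstep (k + i₀) (by omega)
            simpa [Nat.add_right_comm] using this)
          (by show s (d + i₀) = s (0 + i₀)
              rw [show d + i₀ = j₀ by omega, Nat.zero_add]; exact heq.symm)
        intro k hk
        simpa using this k hk
      -- outer closed walk
      set m' := m - d with hm'
      have hi₀m' : i₀ < m' := by omega
      set s' : ℕ → Q := fun k => if k ≤ i₀ then s k else s (k + d) with hs'
      have hout : ∀ k ≤ m', s' k = s' 0 := by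
        refine ih m' (by omega) s' ?_ ?_
        · intro k hk
          rcases Nat.lt_trichotomy k i₀ with h | h | h
          · have e1 : s' k = s k := if_pos (by omega)
            have e2 : s' (k+1) = s (k+1) := if_pos (by omega)
            rw [e1, e2]; exact hstep k (by omega)
          · have e1 : s' k = s k := if_pos (by omega)
            have e2 : s' (k+1) = s (j₀ + 1) := by
              rw [hs']; simp only [if_neg (by omega : ¬ k + 1 ≤ i₀)]
              congr 1; omega
            have e3 : s k = s j₀ := by rw [h]; exact heq
            rw [e1, e2, e3]; exact hstep j₀ (by omega)
          · have e1 : s' k = s (k + d) := if_neg (by omega)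
            have e2 : s' (k+1) = s (k + d + 1) := by
              rw [hs']; simp only [if_neg (by omega : ¬ k + 1 ≤ i₀)]
              congr 1; omega
            rw [e1, e2]; exact hstep (k + d) (by omega)
        · have e1 : s' m' = s m := by
            rw [hs']; simp only [if_neg (by omega : ¬ m' ≤ i₀)]
            congr 1; omega
          have e2 : s' 0 = s 0 := if_pos (by omega)
          rw [e1, e2, hclosed]
      have hs'0 : s' 0 = s 0 := if_pos (by omega)
      rcases le_or_gt i i₀ with h | h
      · have : s' i = s i := if_pos (by omega)
        rw [← this, hout i (by omega), hs'0]
      rcases le_or_gt i j₀ with h2 | h2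
      · have := hmid (i - i₀) (by omega)
        rw [show i - i₀ + i₀ = i by omega] at this
        rw [this]
        have e : s' i₀ = s i₀ := if_pos (by omega)
        rw [← e, hout i₀ (by omega), hs'0]
      · have e : s' (i - d) = s i := by
          rw [hs']; simp only [if_neg (by omega : ¬ i - d ≤ i₀)]
          congr 1; omega
        rw [← e, hout (i - d) (by omega), hs'0]

lemma deltaStar_append {Q A : Type*} (δ : Q → A → Q) (p : Q) (u v : List A) :
    deltaStar δ p (u ++ v) = deltaStar δ (deltaStar δ p u) v := by
  simp [deltaStar]

lemma deltaStar_cons {Q A : Type*} (δ : Q → A → Q) (p : Q) (a : A) (u : List A) :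
    deltaStar δ p (a :: u) = deltaStar δ (δ p a) u := rfl

lemma deltaStar_take_succ {Q A : Type*} (δ : Q → A → Q) (p : Q) (u : List A)
    (k : ℕ) (hk : k < u.length) :
    deltaStar δ p (u.take (k+1)) = δ (deltaStar δ p (u.take k)) (u.get ⟨k, hk⟩) := by
  rw [List.take_succ]
  rw [List.getElem?_eq_getElem hk]
  rw [deltaStar_append]
  rfl

lemma reach_antisymm {Q A : Type*} {δ : Q → A → Q} (hwa : WeaklyAcyclic δ)
    {p q : Q} (u v : List A) (hu : deltaStar δ p u = q) (hv : deltaStar δ q v = p) :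
    p = q := by
  set s : ℕ → Q := fun k => deltaStar δ p ((u ++ v).take k) with hs
  have hstep : ∀ i < (u ++ v).length, Step δ (s i) (s (i+1)) := by
    intro i hi
    exact ⟨(u ++ v).get ⟨i, hi⟩, (deltaStar_take_succ δ p (u ++ v) i hi).symm⟩
  have hclosed : s (u ++ v).length = s 0 := by
    rw [hs]
    simp only [List.take_length, List.take_zero]
    rw [deltaStar_append, hu, hv]
    rfl
  have := closed_walk_const hwa (u ++ v).length s hstep hclosed u.length
    (by simp [List.length_append])
  rw [hs] at this
  simp only [List.take_left] at this
  rw [hu] at this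
  rw [this]
  simp [deltaStar]

lemma deltaStar_mem_of_closed {Q A : Type*} {δ : Q → A → Q} {S : Finset Q}
    (hcl : ∀ p ∈ S, ∀ a, δ p a ∈ S) :
    ∀ (u : List A) (p : Q), p ∈ S → deltaStar δ p u ∈ S := by
  intro u
  induction u with
  | nil => intro p hp; exact hp
  | cons a u ih => intro p hp; rw [deltaStar_cons]; exact ih _ (hcl p hp a)

lemma deltaStar_fixed {Q A : Type*} {δ : Q → A → Q} {q : Q}
    (h : ∀ a, δ q a = q) : ∀ u : List A, deltaStar δ q u = q := by
  intro u
  induction u with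
  | nil => rfl
  | cons a u ih => rw [deltaStar_cons, h a]; exact ih

lemma key {Q A : Type*} [DecidableEq Q] {δ : Q → A → Q} (hwa : WeaklyAcyclic δ) :
    ∀ (n : ℕ) (S : Finset Q), S.card = n → S.Nonempty →
      (∀ p ∈ S, ∀ a, δ p a ∈ S) → ∀ (t : Q) (w : List A),
      (∀ p ∈ S, deltaStar δ p w = t) →
      ∃ w' : List A, w'.length ≤ S.card - 1 ∧ ∀ p ∈ S, deltaStar δ p w' = t := by
  classical
  intro n
  induction n using Nat.strong_induction_on with
  | _ n ih =>
    intro S hcard hne hcl t w hw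
    have hts : t ∈ S := by
      obtain ⟨p, hp⟩ := hne
      rw [← hw p hp]
      exact deltaStar_mem_of_closed hcl w p hp
    rcases le_or_gt S.card 1 with h1 | h1
    · refine ⟨[], by simp, ?_⟩
      intro p hp
      have : p = t := by
        have := Finset.card_le_one.mp h1 p hp t hts
        exact this
      simpa [deltaStar] using this
    · -- find a minimal element q of S w.r.t. reachability
      obtain ⟨q, hqS, hqmin⟩ := S.exists_min_image
        (fun q => (S.filter (fun p => ∃ u : List A, deltaStar δ p u = q)).card) hne
      have hmin : ∀ p ∈ S, (∃ u : List A, deltaStar δ p u = q) → p = q := by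
        intro p hp ⟨u, hu⟩
        by_contra hpq
        have hsub : S.filter (fun r => ∃ v : List A, deltaStar δ r v = p) ⊆
            S.filter (fun r => ∃ v : List A, deltaStar δ r v = q) := by
          intro r hr
          rw [Finset.mem_filter] at hr ⊢
          obtain ⟨hrS, v, hv⟩ := hr
          exact ⟨hrS, v ++ u, by rw [deltaStar_append, hv, hu]⟩
        have hqin : q ∈ S.filter (fun r => ∃ v : List A, deltaStar δ r v = q) :=
          Finset.mem_filter.mpr ⟨hqS, [], rfl⟩
        have hqnot : q ∉ S.filter (fun r => ∃ v : List A, deltaStar δ r v = p) := by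
          intro hmem
          obtain ⟨-, v, hv⟩ := Finset.mem_filter.mp hmem
          exact hpq (reach_antisymm hwa u v hu hv)
        have hlt := Finset.card_lt_card ⟨hsub, fun hsup => hqnot (hsup hqin)⟩
        exact absurd (hqmin p hp) (not_le.mpr hlt)
      have hqt : q ≠ t := by
        intro hq
        obtain ⟨p, hp, hpq⟩ := Finset.exists_mem_ne h1 q
        exact hpq (hmin p hp ⟨w, by rw [hw p hp, hq]⟩)
      have ⟨a, ha⟩ : ∃ a : A, δ q a ≠ q := by
        by_contra h
        push_neg at h
        exact hqt (by rw [← hw q hqS, deltaStar_fixed h])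
      set S' := S.erase q with hS'
      have hcard' : S'.card = S.card - 1 := Finset.card_erase_of_mem hqS
      have hne' : S'.Nonempty := by
        rw [← Finset.card_pos]; omega
      have hcl' : ∀ p ∈ S', ∀ b, δ p b ∈ S' := by
        intro p hp b
        have hpS := Finset.mem_of_mem_erase hp
        refine Finset.mem_erase.mpr ⟨?_, hcl p hpS b⟩
        intro hdb
        exact (Finset.ne_of_mem_erase hp) (hmin p hpS ⟨[b], by simpa [deltaStar] using hdb⟩)
      obtain ⟨w', hlen, hsy⟩ := ih S'.card (by omega) S' rfl hne' hcl' t w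
        (fun p hp => hw p (Finset.mem_of_mem_erase hp))
      refine ⟨a :: w', by simp only [List.length_cons]; omega, ?_⟩
      intro p hp
      rw [deltaStar_cons]
      refine hsy _ (Finset.mem_erase.mpr ⟨?_, hcl p hp a⟩)
      intro hda
      have hpq := hmin p hp ⟨[a], by simpa [deltaStar] using hda⟩
      rw [hpq] at hda
      exact ha hda


/-- Every synchronizing weakly acyclic automaton with `n` states has a synchronizing word
of length at most `n - 1`. -/
theorem stmt6 {Q A : Type*} [Fintype Q] [Fintype A] (δ : Q → A → Q) (n : ℕ)
    (hn : Fintype.card Q = n) (hwa : WeaklyAcyclic δ)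
    (hsync : ∃ (w : List A) (q : Q), ∀ p : Q, deltaStar δ p w = q) :
    ∃ (w : List A) (q : Q), w.length ≤ n - 1 ∧ ∀ p : Q, deltaStar δ p w = q := by
  classical
  obtain ⟨w, q0, hq0⟩ := hsync
  obtain ⟨w', hlen, hsy⟩ := key hwa (Finset.univ : Finset Q).card Finset.univ rfl
    ⟨q0, Finset.mem_univ q0⟩ (fun p _ a => Finset.mem_univ _) q0 w
    (fun p _ => hq0 p)
  refine ⟨w', q0, ?_, fun p => hsy p (Finset.mem_univ p)⟩
  rwa [Finset.card_univ, hn] at hlen
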